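/- Assume the lattice is minimal and elliptic and admits an elliptic sequence (s; B_0,…,B_m; Z_{B_0},…,Z_{B_m}) with associated cycles C_{−1} = s and C_t = s + ∑_{i=0}^{t} Z_{B_i}. If l' ∈ S' satisfies l' − Z_K ∈ L (l' lies in the class of Z_K) and l' ≤ Z_K, then l' = C_t for some −1 ≤ t ≤ m. -/

import Mathlib

open scoped BigOperators

/-- A negative definite lattice on the free ℤ-module with basis indexed by `V`,
realized inside the ℚ-vector space `V → ℚ`.  The basis vector `E_v` is `Pi.single v 1`,
the symmetric bilinear form `B` takes integer values on basis vectors, is negative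
definite, and has nonnegative off-diagonal entries. -/
structure LatticeData (V : Type*) [Fintype V] [DecidableEq V] where
  B : (V → ℚ) →ₗ[ℚ] (V → ℚ) →ₗ[ℚ] ℚ
  symm : ∀ x y, B x y = B y x
  int_basis : ∀ u v : V, ∃ n : ℤ, B (Pi.single u 1) (Pi.single v 1) = (n : ℚ)
  negdef : ∀ x : V → ℚ, x ≠ 0 → B x x < 0
  offdiag : ∀ u v : V, u ≠ v → (0 : ℚ) ≤ B (Pi.single u 1) (Pi.single v 1)

variable {V : Type*} [Fintype V] [DecidableEq V]

/-- The basis vector `E_v`. -/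
def Ev (v : V) : V → ℚ := Pi.single v 1

/-- `x` lies in the lattice `L` (has integral coefficients). -/
def inL (x : V → ℚ) : Prop := ∀ v, ∃ n : ℤ, x v = (n : ℚ)

/-- The support `|x|` of a cycle. -/
def supp (x : V → ℚ) : Set V := {v | x v ≠ 0}

/-- `x ∈ L'`, the dual lattice: all pairings with basis vectors are integers. -/
def inLd (D : LatticeData V) (x : V → ℚ) : Prop := ∀ v, ∃ n : ℤ, D.B x (Ev v) = (n : ℚ)

/-- `x ∈ S'`: the antinef cone of the dual lattice. -/
def inS' (D : LatticeData V) (x : V → ℚ) : Prop := inLd D x ∧ ∀ v, D.B x (Ev v) ≤ 0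

/-- The Riemann–Roch expression `χ(x) = -(x, x - Z_K)/2`. -/
def chi (D : LatticeData V) (ZK x : V → ℚ) : ℚ := -(D.B x (x - ZK)) / 2

/-- `ZK` is the (anti)canonical cycle: `(Z_K, E_v) = (E_v,E_v) + 2` for all `v`. -/
def IsCanonical (D : LatticeData V) (ZK : V → ℚ) : Prop :=
  ∀ v, D.B ZK (Ev v) = D.B (Ev v) (Ev v) + 2

/-- The lattice is minimal: all self-intersections are at most `-2`. -/
def IsMinimal (D : LatticeData V) : Prop := ∀ v : V, D.B (Ev v) (Ev v) ≤ -2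

/-- The lattice is elliptic: `χ(l) ≥ 0` for all `l ∈ L`, `l > 0`, with value 0 attained. -/
def Elliptic (D : LatticeData V) (ZK : V → ℚ) : Prop :=
  (∀ l : V → ℚ, inL l → 0 ≤ l → l ≠ 0 → 0 ≤ chi D ZK l) ∧
  (∃ l : V → ℚ, inL l ∧ 0 ≤ l ∧ l ≠ 0 ∧ chi D ZK l = 0)

/-- The dual graph: `u ≠ v` are adjacent iff `(E_u, E_v) > 0`. -/
def dualGraph (D : LatticeData V) : SimpleGraph V where
  Adj u v := u ≠ v ∧ 0 < D.B (Ev u) (Ev v)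
  symm := by
    constructor
    intro u v h
    exact ⟨h.1.symm, by rw [D.symm]; exact h.2⟩
  loopless := by
    constructor
    intro u h
    exact h.1 rfl

theorem test_preamble : True := trivial

/-- An elliptic sequence `(s; B_0 ⊇ ⋯ ⊇ B_m; Z_{B_0}, …, Z_{B_m})` for the lattice,
following the conventions of the paper: `s` is the minimal antinef representative
of the class of `Z_K` (`s = 0` when `Z_K ∈ L`), `Bset j` is the support `B_j`,
and `Z j` is the fundamental cycle `Z_{B_j}` of `B_j` (for `0 ≤ j ≤ m`). -/
structure EllSeq (D : LatticeData V) (ZK : V → ℚ) where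
  s : V → ℚ
  m : ℕ
  Bset : ℕ → Set V
  Z : ℕ → (V → ℚ)
  hs_S' : inS' D s
  hs_int : inL (ZK - s)
  hs_min : ∀ t : V → ℚ, inS' D t → inL (ZK - t) → s ≤ t
  hB0_not : ¬ inL ZK → Bset 0 = supp (ZK - s)
  hB0_in : inL ZK → Bset 0 = Set.univ
  hmono : ∀ j, j < m → Bset (j + 1) ⊆ Bset j
  hZ_int : ∀ j, j ≤ m → inL (Z j)
  hZ_pos : ∀ j, j ≤ m → 0 ≤ Z j ∧ Z j ≠ 0
  hZ_supp : ∀ j, j ≤ m → supp (Z j) ⊆ Bset j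
  hZ_anti : ∀ j, j ≤ m → ∀ u ∈ Bset j, D.B (Z j) (Ev u) ≤ 0
  hZ_min : ∀ j, j ≤ m → ∀ x : V → ℚ, inL x → 0 ≤ x → x ≠ 0 → supp x ⊆ Bset j →
      (∀ u ∈ Bset j, D.B x (Ev u) ≤ 0) → Z j ≤ x
  hBnext : ∀ j, j < m → Bset (j + 1) = supp (ZK - s - ∑ i ∈ Finset.range (j + 1), Z i)
  hsum : ZK = s + ∑ i ∈ Finset.range (m + 1), Z i

section Statement4Aux

lemma eq_sum_Ev (x : V → ℚ) : x = ∑ v, x v • Ev v := by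
  funext u
  rw [Finset.sum_apply]
  simp [Ev, Pi.single_apply]

lemma B_expand (D : LatticeData V) (x y : V → ℚ) :
    D.B x y = ∑ v, x v * D.B (Ev v) y := by
  conv_lhs => rw [eq_sum_Ev x]
  rw [map_sum, LinearMap.sum_apply]
  exact Finset.sum_congr rfl fun v _ => by
    rw [map_smul, LinearMap.smul_apply, smul_eq_mul]

lemma B_expand' (D : LatticeData V) (x y : V → ℚ) :
    D.B x y = ∑ v, y v * D.B x (Ev v) := by
  rw [D.symm, B_expand]
  exact Finset.sum_congr rfl fun v _ => by rw [D.symm]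

lemma B_nonneg_off (D : LatticeData V) (x : V → ℚ) (hx : 0 ≤ x) (u : V)
    (hu : x u = 0) : 0 ≤ D.B x (Ev u) := by
  rw [B_expand]
  refine Finset.sum_nonneg fun v _ => ?_
  rcases eq_or_ne v u with rfl | h
  · simp [hu]
  · exact mul_nonneg (hx v) (D.offdiag v u h)

lemma antinef_nonneg (D : LatticeData V) (s : V → ℚ)
    (h : ∀ v, D.B s (Ev v) ≤ 0) : 0 ≤ s := by
  set n : V → ℚ := fun v => max (-(s v)) 0 with hn
  have hn0 : 0 ≤ n := fun v => le_max_right _ _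
  have hps : 0 ≤ n + s := by
    intro v
    rcases le_total (s v) 0 with h1 | h1
    · have h2 : n v = -(s v) := max_eq_left (by linarith)
      simp only [Pi.add_apply, Pi.zero_apply, h2]
      linarith
    · have h2 : n v = 0 := max_eq_right (by linarith)
      simp only [Pi.add_apply, Pi.zero_apply, h2]
      linarith
  have hp : ∀ v, n v * (n + s) v = 0 := by
    intro v
    rcases le_total (s v) 0 with h1 | h1
    · have h2 : n v = -(s v) := max_eq_left (by linarith)
      have h3 : (n + s) v = 0 := by simp only [Pi.add_apply, h2]; ring
      rw [h3, mul_zero]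
    · have h2 : n v = 0 := max_eq_right (by linarith)
      rw [h2, zero_mul]
  have key1 : 0 ≤ D.B n (n + s) := by
    rw [B_expand]
    refine Finset.sum_nonneg fun u _ => ?_
    rw [B_expand' D (Ev u) (n + s), Finset.mul_sum]
    refine Finset.sum_nonneg fun v _ => ?_
    rcases eq_or_ne u v with rfl | huv
    · rcases mul_eq_zero.1 (hp u) with h0 | h0
      · simp [h0]
      · simp [h0]
    · have hoff : 0 ≤ D.B (Ev u) (Ev v) := D.offdiag u v huv
      exact mul_nonneg (hn0 u) (mul_nonneg (hps v) hoff)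
  have key2 : D.B n s ≤ 0 := by
    rw [B_expand]
    refine Finset.sum_nonpos fun v _ => ?_
    rw [D.symm]
    exact mul_nonpos_iff.2 (Or.inl ⟨hn0 v, h v⟩)
  have key3 : 0 ≤ D.B n n := by
    have hadd : D.B n (n + s) = D.B n n + D.B n s := map_add (D.B n) n s
    linarith
  have hnz : n = 0 := by
    by_contra hnne
    exact absurd (D.negdef n hnne) (not_lt.2 key3)
  intro v
  have h1 : max (-(s v)) 0 = 0 := by
    have := congrFun hnz v
    simpa [hn] using this
  have h2 : -(s v) ≤ 0 := h1 ▸ le_max_left (-(s v)) 0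
  simpa using neg_nonpos.mp h2

lemma inL_zero : inL (0 : V → ℚ) := fun _ => ⟨0, by simp⟩

lemma inL_add {x y : V → ℚ} (hx : inL x) (hy : inL y) : inL (x + y) := fun v => by
  obtain ⟨a, ha⟩ := hx v
  obtain ⟨b, hb⟩ := hy v
  exact ⟨a + b, by simp [Pi.add_apply, ha, hb]⟩

lemma inL_sum {ι : Type*} (F : Finset ι) (f : ι → V → ℚ) (h : ∀ i ∈ F, inL (f i)) :
    inL (∑ i ∈ F, f i) :=
  Finset.sum_induction f inL (fun _ _ => inL_add) inL_zero h

variable {D : LatticeData V} {ZK : V → ℚ}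

/-- The cycle `C_{t-1} = s + ∑_{i<t} Z_i`. -/
def EllSeq.CS (seq : EllSeq D ZK) (t : ℕ) : V → ℚ :=
  seq.s + ∑ i ∈ Finset.range t, seq.Z i

/-- The tail `T_t = ∑_{t ≤ i ≤ m} Z_i`. -/
def EllSeq.TT (seq : EllSeq D ZK) (t : ℕ) : V → ℚ :=
  ∑ i ∈ Finset.Ico t (seq.m + 1), seq.Z i

lemma EllSeq.TT_nonneg (seq : EllSeq D ZK) (t : ℕ) : 0 ≤ seq.TT t := by
  refine Finset.sum_nonneg fun i hi => ?_
  rw [Finset.mem_Ico] at hi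
  exact (seq.hZ_pos i (by omega)).1

lemma EllSeq.inL_TT (seq : EllSeq D ZK) (t : ℕ) : inL (seq.TT t) :=
  inL_sum _ _ fun i hi => seq.hZ_int i (by rw [Finset.mem_Ico] at hi; omega)

lemma EllSeq.ZK_dec (seq : EllSeq D ZK) (t : ℕ) (ht : t ≤ seq.m + 1) :
    ZK = seq.CS t + seq.TT t := by
  have h : seq.CS t + seq.TT t = seq.s + ∑ i ∈ Finset.range (seq.m + 1), seq.Z i := by
    rw [EllSeq.CS, EllSeq.TT, add_assoc]
    congr 1
    rw [Finset.range_eq_Ico,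
      Finset.sum_Ico_consecutive _ (Nat.zero_le t) ht, ← Finset.range_eq_Ico]
  rw [h]
  exact seq.hsum

lemma EllSeq.TT_ne (seq : EllSeq D ZK) (t : ℕ) (ht : t ≤ seq.m) : seq.TT t ≠ 0 := by
  intro h0
  obtain ⟨hZ0, hZne⟩ := seq.hZ_pos t ht
  apply hZne
  funext v
  have h1 : seq.Z t v ≤ seq.TT t v := by
    have h2 : ∀ i ∈ Finset.Ico t (seq.m + 1), 0 ≤ seq.Z i v := by
      intro i hi
      rw [Finset.mem_Ico] at hi
      exact (seq.hZ_pos i (by omega)).1 v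
    have h3 : t ∈ Finset.Ico t (seq.m + 1) := Finset.mem_Ico.2 ⟨le_rfl, by omega⟩
    have := Finset.single_le_sum h2 h3
    simpa [EllSeq.TT, Finset.sum_apply] using this
  have h4 : seq.TT t v = 0 := by rw [h0]; rfl
  have h5 : 0 ≤ seq.Z t v := hZ0 v
  simp only [Pi.zero_apply]
  linarith [h1, h4]

lemma EllSeq.Bmono' (seq : EllSeq D ZK) (a b : ℕ) (hab : a ≤ b) (hb : b ≤ seq.m) :
    seq.Bset b ⊆ seq.Bset a := by
  induction b, hab using Nat.le_induction with
  | base => exact subset_rfl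
  | succ b hab ih => exact (seq.hmono b (by omega)).trans (ih (by omega))

lemma EllSeq.TT_supp (seq : EllSeq D ZK) (t : ℕ) (ht : t ≤ seq.m) (v : V)
    (hv : seq.TT t v ≠ 0) : v ∈ seq.Bset t := by
  have hex : ∃ i ∈ Finset.Ico t (seq.m + 1), seq.Z i v ≠ 0 := by
    by_contra hc
    push_neg at hc
    apply hv
    simp only [EllSeq.TT, Finset.sum_apply]
    exact Finset.sum_eq_zero fun i hi => hc i hi
  obtain ⟨i, hi, hiv⟩ := hex
  rw [Finset.mem_Ico] at hi
  exact seq.Bmono' t i hi.1 (by omega) (seq.hZ_supp i (by omega) hiv)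

lemma EllSeq.CS_succ (seq : EllSeq D ZK) (t : ℕ) :
    seq.CS (t + 1) = seq.CS t + seq.Z t := by
  simp [EllSeq.CS, Finset.sum_range_succ, add_assoc]

lemma EllSeq.CS_nef (seq : EllSeq D ZK) (hZK : IsCanonical D ZK) (hmin : IsMinimal D) :
    ∀ t, t ≤ seq.m → ∀ u, D.B (seq.CS t) (Ev u) ≤ 0 := by
  intro t
  induction t with
  | zero =>
    intro _ u
    have h0 : seq.CS 0 = seq.s := by simp [EllSeq.CS]
    rw [h0]
    exact seq.hs_S'.2 u
  | succ t ih =>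
    intro ht u
    by_cases hu : u ∈ seq.Bset t
    · rw [seq.CS_succ, map_add, LinearMap.add_apply]
      have h1 := ih (by omega) u
      have h2 := seq.hZ_anti t (by omega) u hu
      linarith
    · have hdec := seq.ZK_dec (t + 1) (by omega)
      have hCS : seq.CS (t + 1) = ZK - seq.TT (t + 1) := eq_sub_of_add_eq hdec.symm
      rw [hCS, map_sub, LinearMap.sub_apply]
      have h1 : D.B ZK (Ev u) ≤ 0 := by rw [hZK u]; linarith [hmin u]
      have h2 : 0 ≤ D.B (seq.TT (t + 1)) (Ev u) := by
        refine B_nonneg_off D _ (seq.TT_nonneg (t + 1)) u ?_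
        by_contra hc
        exact hu (seq.hmono t (by omega) (seq.TT_supp (t + 1) (by omega) u hc))
      linarith

lemma EllSeq.CS_perp (seq : EllSeq D ZK) (hZK : IsCanonical D ZK) (hmin : IsMinimal D)
    (hell : Elliptic D ZK) (t : ℕ) (ht : t ≤ seq.m) (u : V) (hu : seq.TT t u ≠ 0) :
    D.B (seq.CS t) (Ev u) = 0 := by
  have hdec := seq.ZK_dec t (by omega)
  have hchi := hell.1 (seq.TT t) (seq.inL_TT t) (seq.TT_nonneg t) (seq.TT_ne t ht)
  have hchieq : chi D ZK (seq.TT t) = D.B (seq.TT t) (seq.CS t) / 2 := by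
    have hTZ : seq.TT t - ZK = -(seq.CS t) := by
      funext v
      have hv : ZK v = seq.CS t v + seq.TT t v := congrFun hdec v
      show seq.TT t v - ZK v = -(seq.CS t v)
      linarith
    simp only [chi]
    rw [hTZ, map_neg]
    ring
  have h1 : 0 ≤ D.B (seq.TT t) (seq.CS t) := by rw [hchieq] at hchi; linarith
  have h2 : ∀ v ∈ Finset.univ, seq.TT t v * D.B (seq.CS t) (Ev v) ≤ 0 := fun v _ =>
    mul_nonpos_iff.2 (Or.inl ⟨seq.TT_nonneg t v, seq.CS_nef hZK hmin t ht v⟩)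
  have h3 : D.B (seq.TT t) (seq.CS t) = ∑ v, seq.TT t v * D.B (seq.CS t) (Ev v) := by
    rw [B_expand]
    exact Finset.sum_congr rfl fun v _ => by rw [D.symm]
  have h4 : (∑ v, seq.TT t v * D.B (seq.CS t) (Ev v)) = 0 :=
    le_antisymm (Finset.sum_nonpos h2) (h3 ▸ h1)
  have h5 := (Finset.sum_eq_zero_iff_of_nonpos h2).1 h4 u (Finset.mem_univ u)
  exact (mul_eq_zero.1 h5).resolve_left hu

lemma EllSeq.s_eq_zero (seq : EllSeq D ZK) (hZKL : inL ZK) : seq.s = 0 := by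
  have h1 : seq.s ≤ 0 := by
    apply seq.hs_min 0
    · exact ⟨fun v => ⟨0, by simp⟩, fun v => by simp⟩
    · simpa using hZKL
  have h2 : 0 ≤ seq.s := antinef_nonneg D seq.s seq.hs_S'.2
  exact le_antisymm h1 h2

end Statement4Aux

/-- for a minimal elliptic lattice with an elliptic sequence, with
`C_{-1} = s` and `C_t = s + ∑_{i ≤ t} Z_{B_i}`: every `l' ∈ S'` in the class of `Z_K`
(i.e. `l' - Z_K ∈ L`) with `l' ≤ Z_K` equals `C_t` for some `-1 ≤ t ≤ m`
(here `t` ranges over `0, …, m + 1` in the shifted indexing `C_{t-1} = s + ∑_{i < t} Z_i`). -/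
theorem statement4 {V : Type*} [Fintype V] [DecidableEq V] [Nonempty V]
    (D : LatticeData V) (ZK : V → ℚ) (hZK : IsCanonical D ZK)
    (hmin : IsMinimal D) (hell : Elliptic D ZK)
    (seq : EllSeq D ZK)
    (l' : V → ℚ) (hl'S : inS' D l') (hl'cl : inL (l' - ZK)) (hl'le : l' ≤ ZK) :
    ∃ t ≤ seq.m + 1, l' = seq.s + ∑ i ∈ Finset.range t, seq.Z i := by
  classical
  -- `s ≤ l'` by minimality of `s` in its class
  have hsl : seq.s ≤ l' := by
    apply seq.hs_min l' hl'S
    intro v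
    obtain ⟨n, hn⟩ := hl'cl v
    refine ⟨-n, ?_⟩
    have h1 : l' v - ZK v = (n : ℚ) := by simpa [Pi.sub_apply] using hn
    have h2 : (ZK - l') v = ZK v - l' v := rfl
    rw [h2]
    push_cast
    linarith
  -- key inductive step
  have key : ∀ t, t ≤ seq.m → seq.CS t ≤ l' → l' ≠ seq.CS t → seq.CS (t + 1) ≤ l' := by
    intro t ht hle hne
    have hdec := seq.ZK_dec t (by omega)
    set x : V → ℚ := l' - seq.CS t with hx
    have hxv : ∀ v, x v = l' v - seq.CS t v := fun v => rfl
    have hxL : inL x := by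
      have hxe : x = (l' - ZK) + seq.TT t := by
        funext v
        have hv : ZK v = seq.CS t v + seq.TT t v := congrFun hdec v
        show l' v - seq.CS t v = (l' v - ZK v) + seq.TT t v
        linarith
      rw [hxe]
      exact inL_add hl'cl (seq.inL_TT t)
    have hx0 : 0 ≤ x := by
      intro v
      have h1 := hle v
      have h2 := hxv v
      simp only [Pi.zero_apply]
      linarith
    have hxne : x ≠ 0 := sub_ne_zero.mpr hne
    have hxle : ∀ v, x v ≤ seq.TT t v := by
      intro v
      have h1 := hl'le v
      have h2 : ZK v = seq.CS t v + seq.TT t v := congrFun hdec v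
      have h3 := hxv v
      linarith
    have hsupp : supp x ⊆ seq.Bset t := by
      intro v hv
      have hv' : x v ≠ 0 := hv
      have h1 : 0 < x v := lt_of_le_of_ne (hx0 v) (Ne.symm hv')
      apply seq.TT_supp t ht v
      intro h0
      have := hxle v
      rw [h0] at this
      linarith
    have hnef : ∀ u ∈ seq.Bset t, D.B x (Ev u) ≤ 0 := by
      intro u hu
      have hsub : D.B x (Ev u) = D.B l' (Ev u) - D.B (seq.CS t) (Ev u) := by
        rw [hx, map_sub, LinearMap.sub_apply]
      by_cases hTu : seq.TT t u = 0
      · rcases Nat.eq_zero_or_pos t with rfl | htpos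
        · by_cases hZKL : inL ZK
          · have hs0 := seq.s_eq_zero hZKL
            have hCS0 : seq.CS 0 = 0 := by simp [EllSeq.CS, hs0]
            rw [hsub, hCS0]
            have : D.B (0 : V → ℚ) (Ev u) = 0 := by simp
            rw [this]
            have := hl'S.2 u
            linarith
          · exfalso
            have hB0 := seq.hB0_not hZKL
            rw [hB0] at hu
            have hZs : ZK - seq.s = seq.TT 0 := by
              funext v
              have hv : ZK v = seq.CS 0 v + seq.TT 0 v := congrFun hdec v
              have hcs : seq.CS 0 v = seq.s v := by
                simp [EllSeq.CS]
              show ZK v - seq.s v = seq.TT 0 v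
              linarith
            rw [hZs] at hu
            exact hu hTu
        · exfalso
          obtain ⟨t', rfl⟩ : ∃ t', t = t' + 1 := ⟨t - 1, by omega⟩
          have hB := seq.hBnext t' (by omega)
          rw [hB] at hu
          have hZs : ZK - seq.s - ∑ i ∈ Finset.range (t' + 1), seq.Z i
              = seq.TT (t' + 1) := by
            funext v
            have hv : ZK v = seq.CS (t' + 1) v + seq.TT (t' + 1) v := congrFun hdec v
            have hcs : seq.CS (t' + 1) v
                = seq.s v + (∑ i ∈ Finset.range (t' + 1), seq.Z i) v := by
              simp [EllSeq.CS]
            show ZK v - seq.s v - (∑ i ∈ Finset.range (t' + 1), seq.Z i) v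
                = seq.TT (t' + 1) v
            linarith
          rw [hZs] at hu
          exact hu hTu
      · rw [hsub, seq.CS_perp hZK hmin hell t ht u hTu]
        have := hl'S.2 u
        linarith
    have hZle := seq.hZ_min t ht x hxL hx0 hxne hsupp hnef
    rw [seq.CS_succ]
    intro v
    have h1 := hZle v
    have h2 := hxv v
    have h3 : (seq.CS t + seq.Z t) v = seq.CS t v + seq.Z t v := rfl
    rw [h3]
    linarith
  -- main induction
  have main : ∀ t, t ≤ seq.m + 1 →
      (seq.CS t ≤ l') ∨ (∃ t' ≤ seq.m + 1, l' = seq.CS t') := by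
    intro t
    induction t with
    | zero =>
      intro _
      left
      have h0 : seq.CS 0 = seq.s := by simp [EllSeq.CS]
      rw [h0]
      exact hsl
    | succ t ih =>
      intro ht
      rcases ih (by omega) with hle | hdone
      · by_cases hne : l' = seq.CS t
        · exact Or.inr ⟨t, by omega, hne⟩
        · exact Or.inl (key t (by omega) hle hne)
      · exact Or.inr hdone
  rcases main (seq.m + 1) le_rfl with hle | ⟨t, ht, heq⟩
  · refine ⟨seq.m + 1, le_rfl, ?_⟩
    have hZKeq : seq.CS (seq.m + 1) = ZK := seq.hsum.symm
    have hfin : l' = seq.CS (seq.m + 1) :=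
      le_antisymm (by rw [hZKeq]; exact hl'le) hle
    simpa [EllSeq.CS] using hfin
  · exact ⟨t, ht, by simpa [EllSeq.CS] using heq⟩
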